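/- arXiv:1801.08490 — 3 statements merged into one kernel-verified Lean document; each statement's English description precedes it below -/
import Mathlib

section
/- Let Λ₁, Λ₂ ⊆ ℝ^d with Λ₁ relatively dense (there is R < ∞ such that every ball of radius R meets Λ₁), and suppose the difference set Λ₁ − Λ₂ = {x − y : x ∈ Λ₁, y ∈ Λ₂} is discrete (has no finite limit points). Then Λ₂ is uniformly discrete: inf{|λ − λ'| : λ, λ' ∈ Λ₂, λ ≠ λ'} > 0. -/
open Metric Filter

/-- If `Λ₁` is relatively dense and the difference set `Λ₁ − Λ₂` is discrete
(has no finite limit points), then `Λ₂` is uniformly discrete. -/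
theorem stmt_2 (d : ℕ) (Λ₁ Λ₂ : Set (EuclideanSpace ℝ (Fin d)))
    (hrd : ∃ R > (0 : ℝ), ∀ x : EuclideanSpace ℝ (Fin d), ∃ y ∈ Λ₁, dist x y ≤ R)
    (hdisc : ∀ x : EuclideanSpace ℝ (Fin d),
      ¬ AccPt x (Filter.principal {z | ∃ a ∈ Λ₁, ∃ b ∈ Λ₂, z = a - b})) :
    ∃ η > (0 : ℝ), ∀ x ∈ Λ₂, ∀ y ∈ Λ₂, x ≠ y → η ≤ dist x y := by
  obtain ⟨R, hR, hRd⟩ := hrd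
  by_contra h
  push_neg at h
  have hseq : ∀ n : ℕ, ∃ x ∈ Λ₂, ∃ y ∈ Λ₂, x ≠ y ∧ dist x y < 1 / (n + 1) := by
    intro n
    obtain ⟨x, hx, y, hy, hxy, hd⟩ := h (1 / (n + 1)) (by positivity)
    exact ⟨x, hx, y, hy, hxy, hd⟩
  choose x hx y hy hxy hd using hseq
  choose a ha haR using fun n => hRd (x n)
  set D : Set (EuclideanSpace ℝ (Fin d)) := {z | ∃ a ∈ Λ₁, ∃ b ∈ Λ₂, z = a - b} with hD
  set z : ℕ → EuclideanSpace ℝ (Fin d) := fun n => a n - x n with hz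
  set w : ℕ → EuclideanSpace ℝ (Fin d) := fun n => a n - y n with hw
  have hzD : ∀ n, z n ∈ D := fun n => ⟨a n, ha n, x n, hx n, rfl⟩
  have hwD : ∀ n, w n ∈ D := fun n => ⟨a n, ha n, y n, hy n, rfl⟩
  have hzw : ∀ n, z n ≠ w n := fun n hzw => hxy n (sub_right_injective hzw)
  have hzball : ∀ n, z n ∈ closedBall (0 : EuclideanSpace ℝ (Fin d)) R := by
    intro n
    rw [mem_closedBall, dist_zero_right, ← dist_eq_norm, dist_comm]
    exact haR n
  obtain ⟨c, _, φ, hφ, hlimz⟩ := (isCompact_closedBall (0 : EuclideanSpace ℝ (Fin d)) R).tendsto_subseq hzball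
  have hdistzw : ∀ n, dist (z n) (w n) < 1 / (n + 1) := by
    intro n
    have : dist (z n) (w n) = dist (y n) (x n) := by
      rw [dist_eq_norm, dist_eq_norm]
      congr 1
      simp only [hz, hw]
      abel
    rw [this, dist_comm]
    exact hd n
  have hlimw : Tendsto (w ∘ φ) atTop (nhds c) := by
    apply hlimz.congr_dist
    apply squeeze_zero (fun n => dist_nonneg) (fun n => (hdistzw (φ n)).le.trans ?_)
    · exact tendsto_one_div_add_atTop_nhds_zero_nat
    · gcongr
      exact_mod_cast hφ.le_apply
  refine hdisc c ?_
  rw [accPt_iff_nhds]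
  intro U hU
  obtain ⟨n, hnz, hnw⟩ := ((hlimz.eventually_mem hU).and (hlimw.eventually_mem hU)).exists
  by_cases hc : z (φ n) = c
  · refine ⟨w (φ n), ⟨hnw, hwD (φ n)⟩, ?_⟩
    rw [← hc]
    exact fun h => hzw (φ n) h.symm
  · exact ⟨z (φ n), ⟨hnz, hzD (φ n)⟩, hc⟩
end

section
/- Let Λ ⊆ ℝ^d be a relatively dense set such that Λ − Λ is discrete. Then Λ is uniformly discrete. -/
open Metric Filter

/-- A relatively dense set `Λ ⊆ ℝ^d` with `Λ − Λ` discrete is uniformly discrete. -/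
theorem stmt_3 (d : ℕ) (Λ : Set (EuclideanSpace ℝ (Fin d)))
    (hrd : ∃ R > (0 : ℝ), ∀ x : EuclideanSpace ℝ (Fin d), ∃ y ∈ Λ, dist x y ≤ R)
    (hdisc : ∀ x : EuclideanSpace ℝ (Fin d),
      ¬ AccPt x (Filter.principal {z | ∃ a ∈ Λ, ∃ b ∈ Λ, z = a - b})) :
    ∃ η > (0 : ℝ), ∀ x ∈ Λ, ∀ y ∈ Λ, x ≠ y → η ≤ dist x y := by
  have h0 := hdisc 0
  rw [accPt_iff_nhds] at h0
  push_neg at h0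
  obtain ⟨U, hU, hU0⟩ := h0
  obtain ⟨ε, hε, hball⟩ := Metric.mem_nhds_iff.mp hU
  refine ⟨ε, hε, fun x hx y hy hxy => ?_⟩
  by_contra h
  push_neg at h
  have hmem : x - y ∈ U ∩ {z | ∃ a ∈ Λ, ∃ b ∈ Λ, z = a - b} := by
    refine ⟨hball ?_, ⟨x, hx, y, hy, rfl⟩⟩
    simpa [mem_ball, dist_eq_norm, sub_zero] using h
  have := hU0 _ hmem
  exact hxy (sub_eq_zero.mp this)
end

section
/- Let f be a tempered distribution on ℝ^d satisfying |f(φ)| ≤ c N_{n,m}(φ) for all Schwartz φ, where N_{n,m}(φ) = sup_x max{1,|x|^n} max_{||k||≤m} |D^k φ(x)|, and suppose f = Σ_{λ∈Λ} P_λ(D) δ_λ with Λ discrete. Then deg P_λ ≤ m for every λ ∈ Λ. -/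
open Finset Polynomial
open scoped ContDiff

noncomputable section

namespace S16

/-- Operator on the polynomial factor corresponding to differentiating `P(x)·e^{-x²}`. -/
def D (Q : ℝ[X]) : ℝ[X] := derivative Q - 2 * (X * Q)

/-- The real test-function family: `Q((x-λ)/ε) · e^{-((x-λ)/ε)²}`. -/
def g (lam ε : ℝ) (Q : ℝ[X]) (x : ℝ) : ℝ :=
  Q.eval ((x - lam) / ε) * Real.exp (-(((x - lam) / ε) ^ 2))

lemma g_hasDerivAt (lam : ℝ) (ε : ℝ) (Q : ℝ[X]) (x : ℝ) :
    HasDerivAt (g lam ε Q) (ε⁻¹ * g lam ε (D Q) x) x := by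
  have hv : HasDerivAt (fun x : ℝ => (x - lam) / ε) ε⁻¹ x := by
    simpa using ((hasDerivAt_id x).sub_const lam).div_const ε
  set y := (x - lam) / ε with hy
  have h1 : HasDerivAt (fun y : ℝ => -(y ^ 2)) (-(2 * y)) y := by
    exact ((hasDerivAt_pow 2 y).neg).congr_deriv (by simp)
  have he : HasDerivAt (fun y : ℝ => Real.exp (-(y ^ 2)))
      (Real.exp (-(y ^ 2)) * -(2 * y)) y := by
    exact (Real.hasDerivAt_exp (-(y ^ 2))).comp y h1
  have hu : HasDerivAt (fun y : ℝ => Q.eval y * Real.exp (-(y ^ 2)))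
      ((D Q).eval y * Real.exp (-(y ^ 2))) y := by
    have h2 := (Q.hasDerivAt y).mul he
    exact h2.congr_deriv (by simp only [D, eval_sub, eval_mul, eval_ofNat, eval_X]; ring)
  have h3 := hu.comp x hv
  have : g lam ε Q = (fun y : ℝ => Q.eval y * Real.exp (-(y ^ 2))) ∘
      (fun x : ℝ => (x - lam) / ε) := rfl
  rw [this]
  exact h3.congr_deriv (by simp only [g, ← hy]; ring)

/-- The complex-valued version. -/
def gc (lam ε : ℝ) (Q : ℝ[X]) (x : ℝ) : ℂ := (g lam ε Q x : ℂ)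

lemma iteratedDeriv_gc (lam ε : ℝ) (Q : ℝ[X]) (j : ℕ) :
    iteratedDeriv j (gc lam ε Q) = fun x => ((ε⁻¹ ^ j * g lam ε (D^[j] Q) x : ℝ) : ℂ) := by
  induction j with
  | zero => funext x; simp [gc]
  | succ j ih =>
    rw [iteratedDeriv_succ, ih]
    funext x
    have h : HasDerivAt (fun x => ε⁻¹ ^ j * g lam ε (D^[j] Q) x)
        (ε⁻¹ ^ j * (ε⁻¹ * g lam ε (D (D^[j] Q)) x)) x :=
      (g_hasDerivAt lam ε _ x).const_mul _
    rw [h.ofReal_comp.deriv, Function.iterate_succ_apply']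
    push_cast
    ring

lemma contDiff_poly_eval (Q : ℝ[X]) : ContDiff ℝ ∞ (fun x : ℝ => Q.eval x) := by
  induction Q using Polynomial.induction_on' with
  | add p q hp hq => simpa using hp.add hq
  | monomial i a =>
      simpa [Polynomial.eval_monomial] using contDiff_const.mul (contDiff_id.pow i)

lemma contDiff_gc (lam ε : ℝ) (Q : ℝ[X]) : ContDiff ℝ ∞ (gc lam ε Q) := by
  have hv : ContDiff ℝ ∞ (fun x : ℝ => (x - lam) / ε) :=
    (contDiff_id.sub contDiff_const).div_const ε
  have he : ContDiff ℝ ∞ (fun x : ℝ => Real.exp (-(x ^ 2))) :=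
    Real.contDiff_exp.comp (contDiff_id.pow 2).neg
  exact Complex.ofRealCLM.contDiff.comp
    (((contDiff_poly_eval Q).comp hv).mul (he.comp hv))

lemma D_iter_coeff (k : ℕ) : ∀ j, j ≤ k →
    (∀ i, i < k - j → (D^[j] (X ^ k) : ℝ[X]).coeff i = 0) ∧
    (D^[j] (X ^ k) : ℝ[X]).coeff (k - j) = (k.descFactorial j : ℝ) := by
  intro j
  induction j with
  | zero =>
    intro _
    constructor
    · intro i hi
      rw [Function.iterate_zero_apply, Polynomial.coeff_X_pow]
      simp only [ite_eq_right_iff]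
      omega
    · simp [Polynomial.coeff_X_pow]
  | succ j ih =>
    intro hj
    obtain ⟨h0, h1⟩ := ih (Nat.le_of_succ_le hj)
    rw [Function.iterate_succ_apply']
    set Q : ℝ[X] := D^[j] (X ^ k) with hQ
    have coeffD : ∀ i, (D Q).coeff i =
        Q.coeff (i + 1) * (i + 1) - 2 * (X * Q).coeff i := by
      intro i
      simp [D, Polynomial.coeff_derivative]
    constructor
    · intro i hi
      rw [coeffD]
      match i with
      | 0 =>
        rw [h0 1 (by omega)]
        simp
      | Nat.succ i =>
        rw [Polynomial.coeff_X_mul, h0 (i + 1 + 1) (by omega), h0 i (by omega)]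
        simp
    · rw [coeffD]
      have hk : k - (j + 1) + 1 = k - j := by omega
      rw [hk, h1, Nat.descFactorial_succ]
      by_cases hc : k - (j + 1) = 0
      · rw [hc, show k - j = 1 from by omega]
        simp [Polynomial.mul_coeff_zero]
      · obtain ⟨i, hi⟩ := Nat.exists_eq_succ_of_ne_zero hc
        rw [hi, Polynomial.coeff_X_mul, h0 i (by omega),
          show k - j = i + 2 from by omega]
        push_cast
        ring

lemma pow_mul_exp_le (t : ℕ) (y : ℝ) :
    |y| ^ t * Real.exp (-(y ^ 2)) ≤ t.factorial + 1 := by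
  have hexp : Real.exp (-(y ^ 2)) ≤ 1 := Real.exp_le_one_iff.mpr (neg_nonpos.mpr (sq_nonneg y))
  rcases le_total |y| 1 with h | h
  · have h1 : |y| ^ t ≤ 1 := pow_le_one₀ (abs_nonneg y) h
    have hf : (1 : ℝ) ≤ t.factorial := by exact_mod_cast t.factorial_pos
    nlinarith [Real.exp_pos (-(y ^ 2)), pow_nonneg (abs_nonneg y) t]
  · have h0 : |y| ≤ y ^ 2 := by nlinarith [sq_abs y]
    have h1 : |y| ^ t ≤ (y ^ 2) ^ t := pow_le_pow_left₀ (abs_nonneg y) h0 t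
    have h2 : (y ^ 2) ^ t ≤ t.factorial * Real.exp (y ^ 2) := by
      have h3 := Real.pow_div_factorial_le_exp (x := y ^ 2) (by positivity) t
      have ft : (0 : ℝ) < t.factorial := by exact_mod_cast t.factorial_pos
      calc (y ^ 2) ^ t = (y ^ 2) ^ t / t.factorial * t.factorial := by field_simp
        _ ≤ Real.exp (y ^ 2) * t.factorial := by gcongr
        _ = t.factorial * Real.exp (y ^ 2) := by ring
    calc |y| ^ t * Real.exp (-(y ^ 2))
        ≤ t.factorial * Real.exp (y ^ 2) * Real.exp (-(y ^ 2)) := by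
          have := (Real.exp_pos (-(y ^ 2))).le
          gcongr
          exact h1.trans h2
      _ = t.factorial * Real.exp (y ^ 2 + -(y ^ 2)) := by rw [Real.exp_add]; ring
      _ = t.factorial := by rw [add_neg_cancel, Real.exp_zero, mul_one]
      _ ≤ t.factorial + 1 := by linarith

lemma one_add_pow_mul_exp_le (s : ℕ) (y : ℝ) :
    (1 + |y|) ^ s * Real.exp (-(y ^ 2)) ≤ 2 ^ s * (s.factorial + 1) := by
  have hexp : Real.exp (-(y ^ 2)) ≤ 1 := Real.exp_le_one_iff.mpr (neg_nonpos.mpr (sq_nonneg y))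
  have hexp0 : (0:ℝ) < Real.exp (-(y ^ 2)) := Real.exp_pos _
  have hf : (1 : ℝ) ≤ s.factorial := by exact_mod_cast s.factorial_pos
  rcases le_total |y| 1 with h | h
  · have h1 : (1 + |y|) ^ s ≤ 2 ^ s := by
      apply pow_le_pow_left₀ (by positivity)
      linarith
    calc (1 + |y|) ^ s * Real.exp (-(y ^ 2)) ≤ 2 ^ s * 1 := by
          apply mul_le_mul h1 hexp hexp0.le (by positivity)
      _ ≤ 2 ^ s * (s.factorial + 1) := by nlinarith [pow_pos (by norm_num : (0:ℝ) < 2) s]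
  · have h1 : (1 + |y|) ^ s ≤ 2 ^ s * |y| ^ s := by
      rw [← mul_pow]
      apply pow_le_pow_left₀ (by positivity)
      linarith
    calc (1 + |y|) ^ s * Real.exp (-(y ^ 2)) ≤ 2 ^ s * |y| ^ s * Real.exp (-(y ^ 2)) := by
          gcongr
      _ = 2 ^ s * (|y| ^ s * Real.exp (-(y ^ 2))) := by ring
      _ ≤ 2 ^ s * (s.factorial + 1) := by
          have := pow_mul_exp_le s y
          gcongr

lemma eval_bound (Q : ℝ[X]) (y : ℝ) :
    |Q.eval y| ≤ ∑ i ∈ range (Q.natDegree + 1), |Q.coeff i| * |y| ^ i := by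
  rw [Polynomial.eval_eq_sum_range]
  refine (Finset.abs_sum_le_sum_abs _ _).trans ?_
  apply Finset.sum_le_sum
  intro i _
  rw [abs_mul, abs_pow]

lemma poly_gauss_bound (Q : ℝ[X]) (t : ℕ) :
    ∃ C : ℝ, 0 ≤ C ∧ ∀ y : ℝ,
      (1 + |y|) ^ t * (|Q.eval y| * Real.exp (-(y ^ 2))) ≤ C := by
  refine ⟨∑ i ∈ range (Q.natDegree + 1),
      |Q.coeff i| * (2 ^ (t + i) * ((t + i).factorial + 1)), by positivity, fun y => ?_⟩
  have hexp0 : (0:ℝ) < Real.exp (-(y ^ 2)) := Real.exp_pos _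
  calc (1 + |y|) ^ t * (|Q.eval y| * Real.exp (-(y ^ 2)))
      ≤ (1 + |y|) ^ t * ((∑ i ∈ range (Q.natDegree + 1), |Q.coeff i| * |y| ^ i)
          * Real.exp (-(y ^ 2))) := by
        gcongr
        exact eval_bound Q y
    _ = ∑ i ∈ range (Q.natDegree + 1),
          |Q.coeff i| * (((1 + |y|) ^ t * |y| ^ i) * Real.exp (-(y ^ 2))) := by
        rw [Finset.sum_mul, Finset.mul_sum]
        apply Finset.sum_congr rfl
        intro i _
        ring
    _ ≤ ∑ i ∈ range (Q.natDegree + 1),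
          |Q.coeff i| * (2 ^ (t + i) * ((t + i).factorial + 1)) := by
        apply Finset.sum_le_sum
        intro i _
        gcongr |Q.coeff i| * ?_
        calc (1 + |y|) ^ t * |y| ^ i * Real.exp (-(y ^ 2))
            ≤ (1 + |y|) ^ t * (1 + |y|) ^ i * Real.exp (-(y ^ 2)) := by
              gcongr
              all_goals linarith [abs_nonneg y]
          _ = (1 + |y|) ^ (t + i) * Real.exp (-(y ^ 2)) := by rw [pow_add]
          _ ≤ 2 ^ (t + i) * ((t + i).factorial + 1) := one_add_pow_mul_exp_le _ y

lemma abs_le_of_y (lam : ℝ) {ε : ℝ} (hε1 : 0 < ε) (hε2 : ε ≤ 1) (x : ℝ) :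
    |x| ≤ (1 + |lam|) * (1 + |(x - lam) / ε|) := by
  set y := (x - lam) / ε with hy
  have hxl : x - lam = ε * y := by
    rw [hy]; field_simp
  have h1 : |x| ≤ |lam| + |ε * y| := by
    calc |x| = |lam + (x - lam)| := by ring_nf
      _ ≤ |lam| + |x - lam| := abs_add_le _ _
      _ = |lam| + |ε * y| := by rw [hxl]
  have h2 : |ε * y| ≤ |y| := by
    rw [abs_mul, abs_of_pos hε1]
    nlinarith [abs_nonneg y]
  nlinarith [abs_nonneg lam, abs_nonneg y]

/-- The Schwartz test function. -/
def phi (lam : ℝ) {ε : ℝ} (hε1 : 0 < ε) (hε2 : ε ≤ 1) (Q : ℝ[X]) : SchwartzMap ℝ ℂ where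
  toFun := gc lam ε Q
  smooth' := contDiff_gc lam ε Q
  decay' := by
    intro s i
    obtain ⟨C, hC0, hC⟩ := poly_gauss_bound (D^[i] Q) s
    refine ⟨ε⁻¹ ^ i * ((1 + |lam|) ^ s * C), fun x => ?_⟩
    rw [norm_iteratedFDeriv_eq_norm_iteratedDeriv, iteratedDeriv_gc lam ε Q i]
    set y := (x - lam) / ε with hy
    have hnorm : ‖((ε⁻¹ ^ i * g lam ε (D^[i] Q) x : ℝ) : ℂ)‖
        = ε⁻¹ ^ i * (|(D^[i] Q).eval y| * Real.exp (-(y ^ 2))) := by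
      rw [Complex.norm_real, Real.norm_eq_abs, abs_mul, abs_pow, abs_of_pos (inv_pos.mpr hε1)]
      congr 1
      rw [g, abs_mul, abs_of_pos (Real.exp_pos _)]
    rw [hnorm, Real.norm_eq_abs]
    have hxb : |x| ^ s ≤ (1 + |lam|) ^ s * (1 + |y|) ^ s := by
      rw [← mul_pow]
      exact pow_le_pow_left₀ (abs_nonneg x) (abs_le_of_y lam hε1 hε2 x) s
    calc |x| ^ s * (ε⁻¹ ^ i * (|(D^[i] Q).eval y| * Real.exp (-(y ^ 2))))
        ≤ ((1 + |lam|) ^ s * (1 + |y|) ^ s) *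
            (ε⁻¹ ^ i * (|(D^[i] Q).eval y| * Real.exp (-(y ^ 2)))) := by
          have h1 : (0:ℝ) ≤ |(D^[i] Q).eval y| * Real.exp (-(y ^ 2)) := by positivity
          have h2 : (0:ℝ) ≤ ε⁻¹ ^ i := by positivity
          exact mul_le_mul_of_nonneg_right hxb (by positivity)
      _ = ε⁻¹ ^ i * ((1 + |lam|) ^ s *
            ((1 + |y|) ^ s * (|(D^[i] Q).eval y| * Real.exp (-(y ^ 2))))) := by ring
      _ ≤ ε⁻¹ ^ i * ((1 + |lam|) ^ s * C) := by
          have := hC y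
          gcongr

lemma phi_coe (lam : ℝ) {ε : ℝ} (hε1 : 0 < ε) (hε2 : ε ≤ 1) (Q : ℝ[X]) :
    ⇑(phi lam hε1 hε2 Q) = gc lam ε Q := rfl

lemma g_at_lam (lam : ℝ) (ε : ℝ) (Q : ℝ[X]) : g lam ε Q lam = Q.coeff 0 := by
  simp [g, Polynomial.coeff_zero_eq_eval_zero]

end S16

open S16

/-- (One-dimensional version, fixed `λ`.) If the distribution `f = P(D)δ_λ`,
`f(φ) = Σ_{k≤K} p_k · φ^{(k)}(λ)`, satisfies `|f(φ)| ≤ c·N_{n,m}(φ)` for all Schwartz `φ`,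
where `N_{n,m}(φ) = sup_x max{1,|x|^n} max_{k≤m} |φ^{(k)}(x)|`, then `p_k = 0` for
all `k > m`, i.e. `deg P ≤ m`. -/
theorem stmt_16 (n m K : ℕ) (c : ℝ) (lam : ℝ) (p : ℕ → ℂ)
    (hf : ∀ φ : SchwartzMap ℝ ℂ,
      ‖∑ k ∈ Finset.range (K + 1), p k * iteratedDeriv k (⇑φ) lam‖
        ≤ c * ⨆ x : ℝ, (max 1 (|x| ^ n) *
            (Finset.range (m + 1)).sup' (by simp) (fun k => ‖iteratedDeriv k (⇑φ) x‖))) :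
    ∀ k, m < k → k ≤ K → p k = 0 := by
  have key : ∀ k, m < k → k ≤ K → (∀ j, k < j → j ≤ K → p j = 0) → p k = 0 := by
    intro k hmk hkK hz
    -- the bound `B`, uniform in `ε`
    set Cf : ℕ → ℝ := fun j => (poly_gauss_bound (D^[j] (Polynomial.X ^ k)) n).choose with hCf
    have hCf0 : ∀ j, 0 ≤ Cf j := fun j =>
      (poly_gauss_bound (D^[j] (Polynomial.X ^ k)) n).choose_spec.1
    have hCfb : ∀ j y, (1 + |y|) ^ n *
        (|(D^[j] (Polynomial.X ^ k)).eval y| * Real.exp (-(y ^ 2))) ≤ Cf j := fun j =>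
      (poly_gauss_bound (D^[j] (Polynomial.X ^ k)) n).choose_spec.2
    set B : ℝ := (Finset.range (m + 1)).sup' (by simp) (fun j => (1 + |lam|) ^ n * Cf j) with hB
    have hB0 : 0 ≤ B := by
      refine le_trans ?_ (Finset.le_sup' (fun j => (1 + |lam|) ^ n * Cf j)
        (Finset.mem_range.mpr (Nat.succ_pos m)))
      exact mul_nonneg (by positivity) (hCf0 0)
    -- main estimate for each ε
    have main : ∀ ε : ℝ, 0 < ε → ε ≤ 1 → ‖p k‖ * (k.factorial : ℝ) ≤ (|c| * B) * ε := by
      intro ε hε1 hε2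
      set Q : ℝ[X] := Polynomial.X ^ k with hQdef
      have hφ := hf (phi lam hε1 hε2 Q)
      rw [phi_coe] at hφ
      -- compute the left-hand side
      have hL : ∑ j ∈ Finset.range (K + 1), p j * iteratedDeriv j (gc lam ε Q) lam
          = p k * ((ε⁻¹ ^ k * k.factorial : ℝ) : ℂ) := by
        rw [Finset.sum_eq_single k]
        · simp only [iteratedDeriv_gc, g_at_lam]
          have h1 := (D_iter_coeff k k le_rfl).2
          rw [Nat.sub_self] at h1
          rw [hQdef, h1, Nat.descFactorial_self]
        · intro j hjmem hjne
          rcases lt_or_gt_of_ne hjne with hlt | hgt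
          · simp only [iteratedDeriv_gc, g_at_lam]
            have h0 := (D_iter_coeff k j (le_of_lt hlt)).1 0 (by omega)
            rw [hQdef, h0]
            simp
          · rw [hz j hgt (by have := Finset.mem_range.mp hjmem; omega)]
            simp
        · intro hk
          exact absurd (Finset.mem_range.mpr (by omega)) hk
      rw [hL] at hφ
      have hLnorm : ‖p k * ((ε⁻¹ ^ k * k.factorial : ℝ) : ℂ)‖
          = ‖p k‖ * (ε⁻¹ ^ k * (k.factorial : ℝ)) := by
        rw [norm_mul, Complex.norm_real, Real.norm_eq_abs, abs_of_pos]
        positivity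
      rw [hLnorm] at hφ
      -- bound the sup
      set F : ℝ → ℝ := fun x => max 1 (|x| ^ n) *
          (Finset.range (m + 1)).sup' (by simp) (fun j => ‖iteratedDeriv j (gc lam ε Q) x‖)
          with hF
      have hFb : ∀ x, F x ≤ ε⁻¹ ^ m * B := by
        intro x
        obtain ⟨j0, hj0mem, hj0⟩ := Finset.exists_mem_eq_sup' (s := Finset.range (m + 1))
          (by simp) (fun j => ‖iteratedDeriv j (gc lam ε Q) x‖)
        have hj0m : j0 ≤ m := by
          have := Finset.mem_range.mp hj0mem; omega
        rw [hF]
        simp only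
        rw [hj0]
        set y := (x - lam) / ε with hy
        have hnorm : ‖iteratedDeriv j0 (gc lam ε Q) x‖
            = ε⁻¹ ^ j0 * (|(D^[j0] Q).eval y| * Real.exp (-(y ^ 2))) := by
          rw [iteratedDeriv_gc]
          rw [Complex.norm_real, Real.norm_eq_abs, abs_mul, abs_pow,
            abs_of_pos (inv_pos.mpr hε1)]
          congr 1
          rw [g, abs_mul, abs_of_pos (Real.exp_pos _)]
        rw [hnorm]
        have hεm : ε⁻¹ ^ j0 ≤ ε⁻¹ ^ m := by
          apply pow_le_pow_right₀ _ hj0m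
          rw [le_inv_comm₀ one_pos hε1]
          simpa using hε2
        have hmax : max 1 (|x| ^ n) ≤ (1 + |lam|) ^ n * (1 + |y|) ^ n := by
          apply max_le
          · have h1 : (1:ℝ) ≤ (1 + |lam|) ^ n := one_le_pow₀ (by linarith [abs_nonneg lam])
            have h2 : (1:ℝ) ≤ (1 + |y|) ^ n := one_le_pow₀ (by linarith [abs_nonneg y])
            nlinarith
          · rw [← mul_pow]
            exact pow_le_pow_left₀ (abs_nonneg x) (abs_le_of_y lam hε1 hε2 x) n
        calc max 1 (|x| ^ n) * (ε⁻¹ ^ j0 * (|(D^[j0] Q).eval y| * Real.exp (-(y ^ 2))))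
            ≤ ((1 + |lam|) ^ n * (1 + |y|) ^ n) *
              (ε⁻¹ ^ m * (|(D^[j0] Q).eval y| * Real.exp (-(y ^ 2)))) := by
              apply mul_le_mul hmax _ (by positivity) (by positivity)
              exact mul_le_mul_of_nonneg_right hεm (by positivity)
          _ = ε⁻¹ ^ m * ((1 + |lam|) ^ n *
              ((1 + |y|) ^ n * (|(D^[j0] Q).eval y| * Real.exp (-(y ^ 2))))) := by ring
          _ ≤ ε⁻¹ ^ m * ((1 + |lam|) ^ n * Cf j0) := by
              have := hCfb j0 y
              gcongr
          _ ≤ ε⁻¹ ^ m * B := by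
              have hle : (1 + |lam|) ^ n * Cf j0 ≤ B :=
                Finset.le_sup' (fun j => (1 + |lam|) ^ n * Cf j) hj0mem
              have : (0:ℝ) ≤ ε⁻¹ ^ m := by positivity
              exact mul_le_mul_of_nonneg_left hle this
      have hS : (⨆ x : ℝ, F x) ≤ ε⁻¹ ^ m * B := Real.iSup_le hFb (by positivity)
      have hS0 : 0 ≤ ⨆ x : ℝ, F x := by
        have hbdd : BddAbove (Set.range F) := ⟨ε⁻¹ ^ m * B, by rintro - ⟨x, rfl⟩; exact hFb x⟩
        refine le_trans ?_ (le_ciSup hbdd 0)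
        rw [hF]
        simp only
        have h1 : (0:ℝ) ≤ max 1 (|(0:ℝ)| ^ n) := le_trans zero_le_one (le_max_left _ _)
        have h2 : ‖iteratedDeriv 0 (gc lam ε Q) 0‖
            ≤ (Finset.range (m + 1)).sup' (by simp)
              (fun j => ‖iteratedDeriv j (gc lam ε Q) (0:ℝ)‖) :=
          Finset.le_sup' (fun j => ‖iteratedDeriv j (gc lam ε Q) (0:ℝ)‖)
            (Finset.mem_range.mpr (Nat.succ_pos m))
        exact mul_nonneg h1 (le_trans (norm_nonneg _) h2)
      have hc : c * (⨆ x : ℝ, F x) ≤ |c| * (ε⁻¹ ^ m * B) := by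
        calc c * (⨆ x : ℝ, F x) ≤ |c| * (⨆ x : ℝ, F x) :=
              mul_le_mul_of_nonneg_right (le_abs_self c) hS0
          _ ≤ |c| * (ε⁻¹ ^ m * B) := mul_le_mul_of_nonneg_left hS (abs_nonneg c)
      have hmain : ‖p k‖ * (ε⁻¹ ^ k * (k.factorial : ℝ)) ≤ |c| * (ε⁻¹ ^ m * B) :=
        le_trans hφ hc
      -- multiply through by ε^k
      have hεk : (0:ℝ) < ε ^ k := pow_pos hε1 k
      have h4 := mul_le_mul_of_nonneg_right hmain hεk.le
      have e1 : ‖p k‖ * (ε⁻¹ ^ k * (k.factorial : ℝ)) * ε ^ k = ‖p k‖ * (k.factorial : ℝ) := by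
        rw [inv_pow]
        linear_combination (‖p k‖ * (k.factorial : ℝ)) * (inv_mul_cancel₀ hεk.ne')
      have e2 : |c| * (ε⁻¹ ^ m * B) * ε ^ k = (|c| * B) * ε ^ (k - m) := by
        have hkm : ε ^ k = ε ^ (k - m) * ε ^ m := by rw [← pow_add, Nat.sub_add_cancel hmk.le]
        rw [hkm, inv_pow]
        have hm : (ε ^ m)⁻¹ * ε ^ m = 1 := inv_mul_cancel₀ (by positivity)
        linear_combination (|c| * B * ε ^ (k - m)) * hm
      rw [e1, e2] at h4
      have e3 : ε ^ (k - m) ≤ ε := by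
        calc ε ^ (k - m) ≤ ε ^ 1 := pow_le_pow_of_le_one hε1.le hε2 (by omega)
          _ = ε := pow_one ε
      calc ‖p k‖ * (k.factorial : ℝ) ≤ (|c| * B) * ε ^ (k - m) := h4
        _ ≤ (|c| * B) * ε := by
            apply mul_le_mul_of_nonneg_left e3 (by positivity)
    -- let ε → 0
    set A : ℝ := |c| * B with hA
    have hA0 : 0 ≤ A := by positivity
    have hfinal : ‖p k‖ * (k.factorial : ℝ) ≤ 0 := by
      apply le_of_forall_pos_le_add
      intro δ hδ
      have hA1 : (0:ℝ) < A + 1 := by linarith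
      set ε : ℝ := min 1 (δ / (A + 1)) with hε
      have hε1 : 0 < ε := lt_min one_pos (by positivity)
      have hε2 : ε ≤ 1 := min_le_left _ _
      calc ‖p k‖ * (k.factorial : ℝ) ≤ A * ε := main ε hε1 hε2
        _ ≤ (A + 1) * (δ / (A + 1)) := by
            apply mul_le_mul (by linarith) (min_le_right _ _) hε1.le (by linarith)
        _ = δ := by field_simp
        _ = 0 + δ := by ring
    have hkfac : (0:ℝ) < (k.factorial : ℝ) := by exact_mod_cast k.factorial_pos
    have : ‖p k‖ ≤ 0 := by nlinarith [norm_nonneg (p k)]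
    exact norm_le_zero_iff.mp this
  -- downward induction
  suffices H : ∀ d, ∀ k, K - k ≤ d → m < k → k ≤ K → p k = 0 by
    intro k h1 h2
    exact H (K - k) k le_rfl h1 h2
  intro d
  induction d with
  | zero =>
    intro k h1 h2 h3
    exact key k h2 h3 (fun j hj1 hj2 => absurd hj2 (by omega))
  | succ d ih =>
    intro k h1 h2 h3
    exact key k h2 h3 (fun j hj1 hj2 => ih j (by omega) (by omega) hj2)
end
end
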